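/- Along the straight-line path z(t) = (1/q)(1−t) + zt with z ∈ P: (a) if z_k ≤ 1/q, then t ↦ g_k^r(z(t)) is monotonically decreasing on [0,1]; (b) if z_k > 1/q, then t ↦ g_k^r(z(t)) has at most one critical point in (0,1). -/

import Mathlib

open Real Filter Set Topology


lemma pointW (m : ℕ) (hm : 1 ≤ m) {c e b lam : ℝ} (hc : 0 < c) (he : 0 < e) (hb : 0 ≤ b)
    (hlam : lam = (c + m*e)/((c+e)*(c+e+m*e))) :
    (b - c) * b ^ (m-1) * (1 - lam*b) ≤ e * (c+e)^(m-1) * (1 - lam*(c+e)) := by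
  set bk := c + e with hbk
  set D := c + e + m*e with hD
  have hbkpos : 0 < bk := by positivity
  have hm0 : 0 < (m:ℝ) := by exact_mod_cast hm
  have hDpos : 0 < D := by positivity
  have hnum : 0 < c + m*e := by positivity
  have hlampos : 0 < lam := by rw [hlam]; positivity
  have hlambk : 1 - lam * bk = e / D := by
    rw [hlam]; field_simp; ring
  have hRHS : e * bk^(m-1) * (1 - lam*bk) = e^2 * bk^(m-1) / D := by
    rw [hlambk]; ring
  have hRHSpos : 0 < e * bk^(m-1) * (1 - lam*bk) := by
    rw [hRHS]; positivity
  rcases le_or_gt b c with hbc | hbc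
  · -- b ≤ c : LHS ≤ 0
    have h1 : lam * b < 1 := by
      have : lam * b ≤ lam * c := by nlinarith
      nlinarith [hlambk, div_pos he hDpos]
    have h2 : b - c ≤ 0 := by linarith
    have h3 : (0:ℝ) ≤ b ^ (m-1) := by positivity
    have h4 : (b - c) * b ^ (m-1) ≤ 0 := mul_nonpos_of_nonpos_of_nonneg h2 h3
    have : (b - c) * b ^ (m-1) * (1 - lam*b) ≤ 0 :=
      mul_nonpos_of_nonpos_of_nonneg h4 (by linarith)
    linarith
  · rcases le_or_gt 1 (lam * b) with hlb | hlb
    · -- 1 ≤ lam*b : LHS ≤ 0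
      have h2 : 0 ≤ b - c := by linarith
      have h3 : (0:ℝ) ≤ b ^ (m-1) := by positivity
      have h4 : 0 ≤ (b - c) * b ^ (m-1) := mul_nonneg h2 h3
      have : (b - c) * b ^ (m-1) * (1 - lam*b) ≤ 0 :=
        mul_nonpos_of_nonneg_of_nonpos h4 (by linarith)
      linarith
    · -- main case c < b, lam*b < 1 : log tangent trick
      have hbpos : 0 < b := lt_trans hc hbc
      set y1 := (b - c)/e with hy1
      set y2 := b/bk with hy2
      set y3 := (1 - lam*b)/(1 - lam*bk) with hy3
      have h1lb : 0 < 1 - lam*b := by linarith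
      have h1lbk : 0 < 1 - lam*bk := by rw [hlambk]; positivity
      have hy1p : 0 < y1 := by rw [hy1]; have : 0 < b - c := by linarith
                               positivity
      have hy2p : 0 < y2 := by rw [hy2]; positivity
      have hy3p : 0 < y3 := by rw [hy3]; positivity
      have hsum0 : (y1 - 1) + ((m:ℝ)-1)*(y2-1) + (y3-1) = 0 := by
        rw [hy1, hy2, hy3, hlambk, hlam]
        field_simp
        ring
      have hlog : Real.log (y1 * y2^(m-1) * y3) ≤ 0 := by
        rw [Real.log_mul (by positivity) (ne_of_gt hy3p),
            Real.log_mul (ne_of_gt hy1p) (by positivity), Real.log_pow]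
        have l1 := Real.log_le_sub_one_of_pos hy1p
        have l2 := Real.log_le_sub_one_of_pos hy2p
        have l3 := Real.log_le_sub_one_of_pos hy3p
        have hmc : ((m - 1 : ℕ):ℝ) = (m:ℝ) - 1 := by
          have := Nat.cast_sub hm (R := ℝ); simpa using this
        have hlog2 : ((m-1:ℕ):ℝ) * Real.log y2 ≤ ((m:ℝ)-1) * (y2 - 1) := by
          rw [hmc]
          have hm1 : (0:ℝ) ≤ (m:ℝ) - 1 := by linarith
          exact mul_le_mul_of_nonneg_left l2 hm1
        linarith
      have hprod : y1 * y2^(m-1) * y3 ≤ 1 := by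
        have hp : 0 < y1 * y2^(m-1) * y3 := by positivity
        calc y1 * y2^(m-1) * y3 = Real.exp (Real.log (y1 * y2^(m-1) * y3)) :=
              (Real.exp_log hp).symm
          _ ≤ Real.exp 0 := Real.exp_le_exp.mpr hlog
          _ = 1 := Real.exp_zero
      have hfact : (b - c) * b ^ (m-1) * (1 - lam*b)
          = (y1 * y2^(m-1) * y3) * (e * bk^(m-1) * (1 - lam*bk)) := by
        rw [hy1, hy2, hy3, div_pow]
        field_simp
      rw [hfact]
      exact mul_le_of_le_one_left (le_of_lt hRHSpos) hprod


lemma exists_neg_right {f f' : ℝ → ℝ} (hf : ∀ t, HasDerivAt f (f' t) t)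
    {t0 b : ℝ} (htb : t0 < b) (hz : f t0 = 0) (hd : f' t0 < 0) :
    ∃ s ∈ Set.Ioo t0 b, f s < 0 := by
  have h1 : Tendsto (slope f t0) (𝓝[≠] t0) (𝓝 (f' t0)) :=
    hasDerivAt_iff_tendsto_slope.mp (hf t0)
  have h2 : ∀ᶠ s in 𝓝[≠] t0, slope f t0 s < 0 := h1.eventually_lt_const hd
  have h3 : ∀ᶠ s in 𝓝[>] t0, slope f t0 s < 0 :=
    h2.filter_mono (nhdsWithin_mono t0 (fun x hx => ne_of_gt hx))
  have h4 : Set.Ioo t0 b ∈ 𝓝[>] t0 := Ioo_mem_nhdsGT htb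
  have h5 : ∀ᶠ s in 𝓝[>] t0, s ∈ Set.Ioo t0 b := eventually_of_mem h4 (fun x hx => hx)
  obtain ⟨s, hs1, hs2⟩ := (h3.and h5).exists
  refine ⟨s, hs2, ?_⟩
  have hslope : slope f t0 s = f s / (s - t0) := by
    simp [slope, hz, div_eq_inv_mul]
  rw [hslope] at hs1
  by_contra hge
  push_neg at hge
  have : 0 ≤ f s / (s - t0) := div_nonneg hge (by linarith [hs2.1])
  linarith

lemma exists_pos_left {f f' : ℝ → ℝ} (hf : ∀ t, HasDerivAt f (f' t) t)
    {a t2 : ℝ} (hat : a < t2) (hz : f t2 = 0) (hd : f' t2 < 0) :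
    ∃ s ∈ Set.Ioo a t2, 0 < f s := by
  have h1 : Tendsto (slope f t2) (𝓝[≠] t2) (𝓝 (f' t2)) :=
    hasDerivAt_iff_tendsto_slope.mp (hf t2)
  have h2 : ∀ᶠ s in 𝓝[≠] t2, slope f t2 s < 0 := h1.eventually_lt_const hd
  have h3 : ∀ᶠ s in 𝓝[<] t2, slope f t2 s < 0 :=
    h2.filter_mono (nhdsWithin_mono t2 (fun x hx => ne_of_lt hx))
  have h4 : Set.Ioo a t2 ∈ 𝓝[<] t2 := Ioo_mem_nhdsLT hat
  have h5 : ∀ᶠ s in 𝓝[<] t2, s ∈ Set.Ioo a t2 := eventually_of_mem h4 (fun x hx => hx)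
  obtain ⟨s, hs1, hs2⟩ := (h3.and h5).exists
  refine ⟨s, hs2, ?_⟩
  have hslope : slope f t2 s = f s / (s - t2) := by
    simp [slope, hz, div_eq_inv_mul]
  rw [hslope] at hs1
  by_contra hge
  push_neg at hge
  have hs2' : s - t2 < 0 := by linarith [hs2.2]
  have : 0 ≤ f s / (s - t2) := by
    rw [div_eq_mul_inv]
    nlinarith [inv_nonpos.mpr hs2'.le]
  linarith

lemma unique_zero_of_deriv_neg {f f' : ℝ → ℝ} (hf : ∀ t, HasDerivAt f (f' t) t)
    (hneg : ∀ t ∈ Set.Ioo (0:ℝ) 1, f t = 0 → f' t < 0)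
    {t₁ t₂ : ℝ} (h₁ : t₁ ∈ Set.Ioo (0:ℝ) 1) (h₂ : t₂ ∈ Set.Ioo (0:ℝ) 1)
    (hz₁ : f t₁ = 0) (hz₂ : f t₂ = 0) : t₁ = t₂ := by
  have hcont : Continuous f := by
    rw [continuous_iff_continuousAt]; exact fun t => (hf t).continuousAt
  -- main engine: no two zeros with t₁ < t₂
  have main : ∀ u v : ℝ, u ∈ Set.Ioo (0:ℝ) 1 → v ∈ Set.Ioo (0:ℝ) 1 → f u = 0 → f v = 0 →
      u < v → False := by
    intro u v hu hv hfu hfv huv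
    obtain ⟨s₁, hs₁, hfs₁⟩ := exists_neg_right hf huv hfu (hneg u hu hfu)
    obtain ⟨s₂, hs₂, hfs₂⟩ := exists_pos_left hf (hs₁.2 : s₁ < v) hfv (hneg v hv hfv)
    have hs₁s₂ : s₁ < s₂ := hs₂.1
    set Z : Set ℝ := Set.Icc s₁ s₂ ∩ f ⁻¹' {0} with hZ
    have hZcomp : IsCompact Z :=
      isCompact_Icc.inter_right (isClosed_singleton.preimage hcont)
    have hZne : Z.Nonempty := by
      have hsub := intermediate_value_Icc hs₁s₂.le hcont.continuousOn
      have h0mem : (0:ℝ) ∈ Set.Icc (f s₁) (f s₂) := ⟨hfs₁.le, hfs₂.le⟩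
      obtain ⟨w, hw, hfw⟩ := hsub h0mem
      exact ⟨w, hw, hfw⟩
    set c0 := sSup Z with hc0
    have hc0mem : c0 ∈ Z := hZcomp.sSup_mem hZne
    have hc0Icc : c0 ∈ Set.Icc s₁ s₂ := hc0mem.1
    have hfc0 : f c0 = 0 := hc0mem.2
    have hc0lt : c0 < s₂ := by
      rcases lt_or_eq_of_le hc0Icc.2 with h | h
      · exact h
      · exfalso; rw [h] at hfc0; linarith
    have hc0Ioo : c0 ∈ Set.Ioo (0:ℝ) 1 := by
      constructor
      · calc (0:ℝ) < u := hu.1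
          _ < s₁ := hs₁.1
          _ ≤ c0 := hc0Icc.1
      · calc c0 < s₂ := hc0lt
          _ < v := hs₂.2
          _ < 1 := hv.2
    obtain ⟨w, hw, hfw⟩ := exists_neg_right hf hc0lt hfc0 (hneg c0 hc0Ioo hfc0)
    -- IVT between w and s₂
    obtain ⟨w2, hw2, hfw2⟩ := intermediate_value_Icc hw.2.le hcont.continuousOn
      (⟨hfw.le, hfs₂.le⟩ : (0:ℝ) ∈ Set.Icc (f w) (f s₂))
    have hw2Z : w2 ∈ Z := by
      refine ⟨⟨le_of_lt ?_, hw2.2⟩, hfw2⟩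
      calc s₁ ≤ c0 := hc0Icc.1
        _ < w := hw.1
        _ ≤ w2 := hw2.1
    have : w2 ≤ c0 := le_csSup hZcomp.bddAbove hw2Z
    have : c0 < w2 := lt_of_lt_of_le hw.1 hw2.1
    linarith
  rcases lt_trichotomy t₁ t₂ with h | h | h
  · exact absurd (main t₁ t₂ h₁ h₂ hz₁ hz₂ h) (fun x => x)
  · exact h
  · exact absurd (main t₂ t₁ h₂ h₁ hz₂ hz₁ h) (fun x => x)


namespace GCWP11

variable (q r : ℕ) (β : ℝ) (z : Fin q → ℝ)

noncomputable def A (t : ℝ) (j : Fin q) : ℝ := (1/q)*(1-t) + z j * t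
noncomputable def XX (t : ℝ) (j : Fin q) : ℝ := (z j - 1/q) * (A q z t j)^(r-2)
noncomputable def FF (t : ℝ) (j : Fin q) : ℝ := Real.exp (β * (A q z t j)^(r-1))
noncomputable def SS (t : ℝ) : ℝ := ∑ j, FF q r β z t j
noncomputable def Phi (k : Fin q) (t : ℝ) : ℝ :=
  XX q r z t k * SS q r β z t - ∑ j, FF q r β z t j * XX q r z t j
noncomputable def Phi' (k : Fin q) (t : ℝ) : ℝ :=
  (↑(r-2) * (z k - 1/q)^2 * (A q z t k)^(r-3)) * SS q r β z t
  + XX q r z t k * (∑ j, β * ↑(r-1) * XX q r z t j * FF q r β z t j)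
  - ∑ j, (β * ↑(r-1) * XX q r z t j * FF q r β z t j * XX q r z t j
      + FF q r β z t j * (↑(r-2) * (z j - 1/q)^2 * (A q z t j)^(r-3)))

lemma hasDerivAt_A (t : ℝ) (j : Fin q) :
    HasDerivAt (fun s => A q z s j) (z j - 1/q) t := by
  have h : HasDerivAt (fun s : ℝ => (1/(q:ℝ))*(1-s) + z j * s)
      ((1/(q:ℝ))*(-1) + z j * 1) t :=
    (((hasDerivAt_id t).const_sub 1).const_mul (1/(q:ℝ))).add
      ((hasDerivAt_id t).const_mul (z j))
  unfold A
  convert h using 1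
  ring

lemma hasDerivAt_XX (t : ℝ) (j : Fin q) :
    HasDerivAt (fun s => XX q r z s j) (↑(r-2) * (z j - 1/q)^2 * (A q z t j)^(r-3)) t := by
  have h := ((hasDerivAt_A q z t j).pow (r-2)).const_mul (z j - 1/q)
  refine h.congr_deriv ?_
  have : r - 2 - 1 = r - 3 := by omega
  rw [this]; ring

lemma hasDerivAt_FF (t : ℝ) (j : Fin q) :
    HasDerivAt (fun s => FF q r β z s j)
      (β * ↑(r-1) * XX q r z t j * FF q r β z t j) t := by
  have h := (((hasDerivAt_A q z t j).pow (r-1)).const_mul β).exp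
  simp only [Pi.pow_apply] at h
  refine h.congr_deriv ?_
  have : r - 1 - 1 = r - 2 := by omega
  rw [this]; unfold FF XX; ring

lemma hasDerivAt_SS (t : ℝ) :
    HasDerivAt (fun s => SS q r β z s)
      (∑ j, β * ↑(r-1) * XX q r z t j * FF q r β z t j) t := by
  exact HasDerivAt.fun_sum (fun j _ => hasDerivAt_FF q r β z t j)

lemma hasDerivAt_Phi (k : Fin q) (t : ℝ) :
    HasDerivAt (Phi q r β z k) (Phi' q r β z k t) t := by
  have h1 : HasDerivAt (fun s => XX q r z s k * SS q r β z s)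
      ((↑(r-2) * (z k - 1/q)^2 * (A q z t k)^(r-3)) * SS q r β z t
        + XX q r z t k * (∑ j, β * ↑(r-1) * XX q r z t j * FF q r β z t j)) t :=
    (hasDerivAt_XX q r z t k).mul (hasDerivAt_SS q r β z t)
  have h2 : HasDerivAt (fun s => ∑ j, FF q r β z s j * XX q r z s j)
      (∑ j, (β * ↑(r-1) * XX q r z t j * FF q r β z t j * XX q r z t j
        + FF q r β z t j * (↑(r-2) * (z j - 1/q)^2 * (A q z t j)^(r-3)))) t :=
    HasDerivAt.fun_sum (fun j _ => (hasDerivAt_FF q r β z t j).mul (hasDerivAt_XX q r z t j))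
  exact h1.sub h2

lemma SS_pos (hq : 0 < q) (t : ℝ) : 0 < SS q r β z t := by
  haveI : Nonempty (Fin q) := ⟨⟨0, hq⟩⟩
  exact Finset.sum_pos (fun j _ => Real.exp_pos _) Finset.univ_nonempty

lemma hasDerivAt_target (hq : 0 < q) (k : Fin q) (t : ℝ) :
    HasDerivAt (fun s => FF q r β z s k / SS q r β z s)
      (β * ↑(r-1) * FF q r β z t k * Phi q r β z k t / (SS q r β z t)^2) t := by
  have h := (hasDerivAt_FF q r β z t k).div (hasDerivAt_SS q r β z t)
    (ne_of_gt (SS_pos q r β z hq t))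
  refine h.congr_deriv ?_
  have hs : (∑ j, β * ↑(r-1) * XX q r z t j * FF q r β z t j)
      = β * ↑(r-1) * ∑ j, FF q r β z t j * XX q r z t j := by
    rw [Finset.mul_sum]; exact Finset.sum_congr rfl (fun j _ => by ring)
  rw [hs]; unfold Phi; ring

lemma sum_z_sub (hq : 0 < q) (hz1 : ∑ j, z j = 1) :
    ∑ j, (z j - 1/(q:ℝ)) = 0 := by
  have hqne : (q:ℝ) ≠ 0 := Nat.cast_ne_zero.mpr (by omega)
  rw [Finset.sum_sub_distrib, hz1, Finset.sum_const, Finset.card_univ, Fintype.card_fin,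
    nsmul_eq_mul]
  field_simp
  norm_num

lemma A_sub (t : ℝ) (j : Fin q) : A q z t j - 1/q = (z j - 1/q) * t := by
  unfold A; ring

lemma Phi_nonpos (hq : 2 ≤ q) (hβ : 0 < β) (hz0 : ∀ j, 0 ≤ z j)
    (hz1 : ∑ j, z j = 1) (k : Fin q) (hk : z k ≤ 1/q) {t : ℝ}
    (ht : t ∈ Set.Icc (0:ℝ) 1) : Phi q r β z k t ≤ 0 := by
  have hq0 : 0 < q := by omega
  have hqR : (0:ℝ) < q := by exact_mod_cast hq0
  have hc : (0:ℝ) < 1/q := by positivity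
  have hA0 : ∀ j, 0 ≤ A q z t j := fun j =>
    add_nonneg (mul_nonneg hc.le (by linarith [ht.2])) (mul_nonneg (hz0 j) ht.1)
  have hAle : ∀ j, z j ≤ 1/q → A q z t j ≤ 1/q := fun j h => by
    nlinarith [A_sub q z t j, ht.1]
  have hAge : ∀ j, 1/q ≤ z j → 1/q ≤ A q z t j := fun j h => by
    nlinarith [A_sub q z t j, ht.1]
  set C := Real.exp (β*(1/(q:ℝ))^(r-1)) with hC
  have key1 : ∀ j, 0 ≤ (FF q r β z t j - C) * XX q r z t j := by
    intro j
    rcases le_total (z j) (1/(q:ℝ)) with h | h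
    · have hA : A q z t j ≤ 1/q := hAle j h
      have hpow : (A q z t j)^(r-1) ≤ (1/(q:ℝ))^(r-1) := pow_le_pow_left₀ (hA0 j) hA _
      have hF : FF q r β z t j ≤ C := by
        unfold FF; rw [hC]
        exact Real.exp_le_exp.mpr (mul_le_mul_of_nonneg_left hpow hβ.le)
      have hX : XX q r z t j ≤ 0 :=
        mul_nonpos_of_nonpos_of_nonneg (by linarith) (pow_nonneg (hA0 j) _)
      nlinarith
    · have hA : 1/q ≤ A q z t j := hAge j h
      have hpow : (1/(q:ℝ))^(r-1) ≤ (A q z t j)^(r-1) := pow_le_pow_left₀ hc.le hA _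
      have hF : C ≤ FF q r β z t j := by
        unfold FF; rw [hC]
        exact Real.exp_le_exp.mpr (mul_le_mul_of_nonneg_left hpow hβ.le)
      have hX : 0 ≤ XX q r z t j :=
        mul_nonneg (by linarith) (pow_nonneg (hA0 j) _)
      nlinarith
  have key2 : ∀ j, 0 ≤ (z j - 1/q) * ((A q z t j)^(r-2) - (1/(q:ℝ))^(r-2)) := by
    intro j
    rcases le_total (z j) (1/(q:ℝ)) with h | h
    · have hpow : (A q z t j)^(r-2) ≤ (1/(q:ℝ))^(r-2) := pow_le_pow_left₀ (hA0 j) (hAle j h) _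
      nlinarith
    · have hpow : (1/(q:ℝ))^(r-2) ≤ (A q z t j)^(r-2) := pow_le_pow_left₀ hc.le (hAge j h) _
      nlinarith
  have hsumX : 0 ≤ ∑ j, XX q r z t j := by
    have expand : ∑ j, XX q r z t j
        = (∑ j, (z j - 1/q) * ((A q z t j)^(r-2) - (1/(q:ℝ))^(r-2)))
          + (1/(q:ℝ))^(r-2) * ∑ j, (z j - 1/(q:ℝ)) := by
      rw [Finset.mul_sum, ← Finset.sum_add_distrib]
      exact Finset.sum_congr rfl (fun j _ => by unfold XX; ring)
    rw [expand, sum_z_sub q z hq0 hz1, mul_zero, add_zero]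
    exact Finset.sum_nonneg (fun j _ => key2 j)
  have hsumFX : 0 ≤ ∑ j, FF q r β z t j * XX q r z t j := by
    have expand : ∑ j, FF q r β z t j * XX q r z t j
        = (∑ j, (FF q r β z t j - C) * XX q r z t j) + C * ∑ j, XX q r z t j := by
      rw [Finset.mul_sum, ← Finset.sum_add_distrib]
      exact Finset.sum_congr rfl (fun j _ => by ring)
    rw [expand]
    have hCpos : 0 < C := Real.exp_pos _
    have h1 : 0 ≤ ∑ j, (FF q r β z t j - C) * XX q r z t j :=
      Finset.sum_nonneg (fun j _ => key1 j)
    nlinarith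
  have hXk : XX q r z t k ≤ 0 :=
    mul_nonpos_of_nonpos_of_nonneg (by linarith) (pow_nonneg (hA0 k) _)
  have hXkS : XX q r z t k * SS q r β z t ≤ 0 :=
    mul_nonpos_of_nonpos_of_nonneg hXk (SS_pos q r β z hq0 t).le
  unfold Phi
  linarith


set_option maxHeartbeats 1000000 in
lemma Phi'_neg (hq : 2 ≤ q) (hr : 2 ≤ r) (hβ : 0 < β) (hz0 : ∀ j, 0 ≤ z j)
    (hz1 : ∑ j, z j = 1) (k : Fin q) (hk : 1/q < z k) {t : ℝ}
    (ht : t ∈ Set.Ioo (0:ℝ) 1) (h0 : Phi q r β z k t = 0) : Phi' q r β z k t < 0 := by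
  obtain ⟨ht0, ht1⟩ := ht
  have hq0 : 0 < q := by omega
  have hqR : (0:ℝ) < q := by exact_mod_cast hq0
  have hc : (0:ℝ) < 1/q := by positivity
  haveI : Nonempty (Fin q) := ⟨⟨0, hq0⟩⟩
  have hA0 : ∀ j, 0 < A q z t j := fun j => by
    have h1 : 0 < (1/(q:ℝ))*(1-t) := by nlinarith
    have h2 : 0 ≤ z j * t := mul_nonneg (hz0 j) ht0.le
    unfold A; linarith
  have hSS : 0 < SS q r β z t := SS_pos q r β z hq0 t
  have hFF : ∀ j, 0 < FF q r β z t j := fun j => Real.exp_pos _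
  have hcon : ∑ j, FF q r β z t j * XX q r z t j = XX q r z t k * SS q r β z t := by
    unfold Phi at h0; linarith
  have hXXk : 0 < XX q r z t k := mul_pos (by linarith) (pow_pos (hA0 k) _)
  have hSSdef : ∑ j, FF q r β z t j = SS q r β z t := rfl
  -- variance identity
  have hvar_eq : ∑ j, FF q r β z t j * (XX q r z t j - XX q r z t k)^2
      = ∑ j, FF q r β z t j * XX q r z t j^2 - XX q r z t k^2 * SS q r β z t := by
    have e : ∀ j : Fin q, FF q r β z t j * (XX q r z t j - XX q r z t k)^2
        = FF q r β z t j * XX q r z t j^2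
          - 2*XX q r z t k*(FF q r β z t j * XX q r z t j)
          + XX q r z t k^2 * FF q r β z t j := fun j => by ring
    rw [Finset.sum_congr rfl (fun j _ => e j), Finset.sum_add_distrib,
      Finset.sum_sub_distrib, ← Finset.mul_sum, ← Finset.mul_sum, hcon, hSSdef]
    ring
  -- strict positivity of variance
  have hex : ∃ j : Fin q, XX q r z t j ≠ XX q r z t k := by
    by_contra hno
    push_neg at hno
    have hpos : ∀ j, 0 < z j - 1/(q:ℝ) := by
      intro j
      have h1 : (z j - 1/q) * (A q z t j)^(r-2) = XX q r z t k := by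
        rw [← hno j]; rfl
      have h2 : 0 < (A q z t j)^(r-2) := pow_pos (hA0 j) _
      nlinarith
    have : 0 < ∑ j, (z j - 1/(q:ℝ)) := Finset.sum_pos (fun j _ => hpos j) Finset.univ_nonempty
    rw [sum_z_sub q z hq0 hz1] at this
    exact lt_irrefl _ this
  obtain ⟨j0, hj0⟩ := hex
  have hvar_pos : 0 < ∑ j, FF q r β z t j * (XX q r z t j - XX q r z t k)^2 := by
    apply Finset.sum_pos'
    · intro j _; exact mul_nonneg (hFF j).le (sq_nonneg _)
    · refine ⟨j0, Finset.mem_univ _, ?_⟩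
      have h1 : XX q r z t j0 - XX q r z t k ≠ 0 := sub_ne_zero.mpr hj0
      exact mul_pos (hFF j0) (pow_two_pos_of_ne_zero h1)
  -- Term 1 inequality
  have hterm1 : (↑(r-2):ℝ) * ((z k - 1/q)^2 * (A q z t k)^(r-3) * SS q r β z t)
      ≤ ↑(r-2) * ∑ j, FF q r β z t j * ((z j - 1/q)^2 * (A q z t j)^(r-3)) := by
    rcases Nat.lt_or_ge r 3 with h3 | h3
    · have hr2 : r = 2 := by omega
      subst hr2
      norm_num
    · apply mul_le_mul_of_nonneg_left _ (by positivity : (0:ℝ) ≤ ↑(r-2))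
      -- r ≥ 3 case
      set e := (z k - 1/(q:ℝ)) * t with hedef
      have hepos : 0 < e := mul_pos (by linarith) ht0
      have hAk : A q z t k = 1/q + e := by rw [hedef]; unfold A; ring
      set lam := (1/(q:ℝ) + ↑(r-2)*e)/((1/q+e)*(1/q+e+↑(r-2)*e)) with hlamdef
      have hm1 : 1 ≤ r - 2 := by omega
      have hr31 : r - 2 - 1 = r - 3 := by omega
      have hpw : ∀ j : Fin q,
          (A q z t j - 1/q) * (A q z t j)^(r-3) * (1 - lam * A q z t j)
            ≤ e * (A q z t k)^(r-3) * (1 - lam * A q z t k) := by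
        intro j
        have := pointW (r-2) hm1 hc hepos (hA0 j).le hlamdef (b := A q z t j)
        rw [hr31] at this
        rw [hAk]
        exact this
      have hpow23 : ∀ j : Fin q, (A q z t j)^(r-2) = (A q z t j)^(r-3) * A q z t j := by
        intro j
        rw [← pow_succ]
        congr 1
        omega
      -- weighted sum of pointwise inequalities
      have hsumW : ∑ j, FF q r β z t j *
            ((A q z t j - 1/q) * (A q z t j)^(r-3) * (1 - lam * A q z t j))
          ≤ SS q r β z t * (e * (A q z t k)^(r-3) * (1 - lam * A q z t k)) := by
        calc ∑ j, FF q r β z t j *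
              ((A q z t j - 1/q) * (A q z t j)^(r-3) * (1 - lam * A q z t j))
            ≤ ∑ j, FF q r β z t j * (e * (A q z t k)^(r-3) * (1 - lam * A q z t k)) :=
              Finset.sum_le_sum (fun j _ => mul_le_mul_of_nonneg_left (hpw j) (hFF j).le)
          _ = SS q r β z t * (e * (A q z t k)^(r-3) * (1 - lam * A q z t k)) := by
              rw [← Finset.sum_mul, hSSdef]
      -- constraint in A-form
      have hconA : ∑ j, FF q r β z t j * ((A q z t j - 1/q) * (A q z t j)^(r-2))
          = SS q r β z t * ((A q z t k - 1/q) * (A q z t k)^(r-2)) := by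
        have h1 : ∀ j : Fin q, FF q r β z t j * ((A q z t j - 1/q) * (A q z t j)^(r-2))
            = (FF q r β z t j * XX q r z t j) * t := by
          intro j; rw [A_sub q z t j]; unfold XX; ring
        rw [Finset.sum_congr rfl (fun j _ => h1 j), ← Finset.sum_mul, hcon, A_sub q z t k]
        unfold XX; ring
      -- expand hsumW
      have hexp : ∀ j : Fin q, FF q r β z t j *
            ((A q z t j - 1/q) * (A q z t j)^(r-3) * (1 - lam * A q z t j))
          = FF q r β z t j * ((A q z t j - 1/q) * (A q z t j)^(r-3))
            - lam * (FF q r β z t j * ((A q z t j - 1/q) * (A q z t j)^(r-2))) := by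
        intro j; rw [hpow23 j]; ring
      rw [Finset.sum_congr rfl (fun j _ => hexp j), Finset.sum_sub_distrib,
        ← Finset.mul_sum, hconA] at hsumW
      have hv : ∑ j, FF q r β z t j * ((A q z t j - 1/q) * (A q z t j)^(r-3))
          ≤ SS q r β z t * ((A q z t k - 1/q) * (A q z t k)^(r-3)) := by
        have hrhs : SS q r β z t * (e * (A q z t k)^(r-3) * (1 - lam * A q z t k))
            = SS q r β z t * (e * (A q z t k)^(r-3))
              - lam * (SS q r β z t * (e * (A q z t k)^(r-2))) := by
          rw [hpow23 k]; ring
        rw [hrhs] at hsumW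
        have heAk : A q z t k - 1/q = e := by rw [hAk]; ring
        rw [heAk]
        rw [heAk] at hsumW
        linarith
      -- Y-form
      have hY : SS q r β z t * ((A q z t k - 1/q)^2 * (A q z t k)^(r-3))
          ≤ ∑ j, FF q r β z t j * ((A q z t j - 1/q)^2 * (A q z t j)^(r-3)) := by
        have hYe : ∀ j : Fin q, (A q z t j - 1/q)^2 * (A q z t j)^(r-3)
            = (A q z t j - 1/q) * (A q z t j)^(r-2)
              - (1/q) * ((A q z t j - 1/q) * (A q z t j)^(r-3)) := by
          intro j; rw [hpow23 j]; ring
        have expand : ∑ j, FF q r β z t j * ((A q z t j - 1/q)^2 * (A q z t j)^(r-3))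
            = ∑ j, FF q r β z t j * ((A q z t j - 1/q) * (A q z t j)^(r-2))
              - (1/q) * ∑ j, FF q r β z t j * ((A q z t j - 1/q) * (A q z t j)^(r-3)) := by
          rw [Finset.mul_sum, ← Finset.sum_sub_distrib]
          exact Finset.sum_congr rfl (fun j _ => by rw [hYe j]; ring)
        rw [expand, hconA, hYe k]
        have := mul_le_mul_of_nonneg_left hv hc.le
        ring_nf
        ring_nf at this
        linarith
      -- convert to (z-c)^2 form
      have hconv : ∀ j : Fin q, (A q z t j - 1/q)^2 * (A q z t j)^(r-3)
          = ((z j - 1/q)^2 * (A q z t j)^(r-3)) * t^2 := by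
        intro j; rw [A_sub q z t j]; ring
      rw [hconv k] at hY
      have hsum2 : ∑ j, FF q r β z t j * ((A q z t j - 1/q)^2 * (A q z t j)^(r-3))
          = (∑ j, FF q r β z t j * ((z j - 1/q)^2 * (A q z t j)^(r-3))) * t^2 := by
        rw [Finset.sum_mul]
        exact Finset.sum_congr rfl (fun j _ => by rw [hconv j]; ring)
      rw [hsum2] at hY
      have ht2 : (0:ℝ) < t^2 := by positivity
      have := le_of_mul_le_mul_right (by nlinarith [hY] :
        ((z k - 1/q)^2 * (A q z t k)^(r-3) * SS q r β z t) * t^2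
          ≤ (∑ j, FF q r β z t j * ((z j - 1/q)^2 * (A q z t j)^(r-3))) * t^2) ht2
      exact this
  -- assemble
  have hr1 : (0:ℝ) < ↑(r-1) := by exact_mod_cast (by omega : 0 < r - 1)
  have e1 : ∑ j, (β * ↑(r-1) * XX q r z t j * FF q r β z t j * XX q r z t j
        + FF q r β z t j * (↑(r-2) * (z j - 1/q)^2 * (A q z t j)^(r-3)))
      = β * ↑(r-1) * (∑ j, FF q r β z t j * XX q r z t j^2)
        + ↑(r-2) * (∑ j, FF q r β z t j * ((z j - 1/q)^2 * (A q z t j)^(r-3))) := by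
    rw [Finset.sum_add_distrib, Finset.mul_sum, Finset.mul_sum]
    congr 1
    · exact Finset.sum_congr rfl (fun j _ => by ring)
    · exact Finset.sum_congr rfl (fun j _ => by ring)
  have e2 : XX q r z t k * (∑ j, β * ↑(r-1) * XX q r z t j * FF q r β z t j)
      = β * ↑(r-1) * (XX q r z t k * (XX q r z t k * SS q r β z t)) := by
    have h1 : ∑ j, β * ↑(r-1) * XX q r z t j * FF q r β z t j
        = β * ↑(r-1) * ∑ j, FF q r β z t j * XX q r z t j := by
      rw [Finset.mul_sum]
      exact Finset.sum_congr rfl (fun j _ => by ring)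
    rw [h1, hcon]; ring
  unfold Phi'
  rw [e1, e2]
  have hB : β * ↑(r-1) * (XX q r z t k * (XX q r z t k * SS q r β z t))
      - β * ↑(r-1) * (∑ j, FF q r β z t j * XX q r z t j^2) < 0 := by
    have h2 : 0 < β * ↑(r-1) := mul_pos hβ hr1
    nlinarith [hvar_eq, hvar_pos]
  linarith [hterm1, hB]


end GCWP11


/-- Along the straight-line path `z(t) = (1/q)(1−t) + zt` with `z` in
the simplex: (a) if `z_k ≤ 1/q` then `t ↦ g_k^r(z(t))` is monotonically decreasing
on [0,1]; (b) if `z_k > 1/q` then `t ↦ g_k^r(z(t))` has at most one critical point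
in (0,1). -/
theorem gcwp_coordinate_monotonicity_along_line
    (q r : ℕ) (hq : 2 ≤ q) (hr : 2 ≤ r) (β : ℝ) (hβ : 0 < β)
    (z : Fin q → ℝ) (hz : (∀ k, 0 ≤ z k) ∧ ∑ k, z k = 1)
    (hzne : z ≠ fun _ => 1 / (q : ℝ)) :
    let zp : ℝ → Fin q → ℝ := fun t k => (1 / q) * (1 - t) + z k * t
    let g : (Fin q → ℝ) → (Fin q → ℝ) := fun w k =>
      Real.exp (β * w k ^ (r - 1)) / ∑ j, Real.exp (β * w j ^ (r - 1))
    ∀ k : Fin q,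
      (z k ≤ 1 / q → AntitoneOn (fun t => g (zp t) k) (Set.Icc (0 : ℝ) 1)) ∧
      (1 / q < z k →
        ∀ t₁ ∈ Set.Ioo (0 : ℝ) 1, ∀ t₂ ∈ Set.Ioo (0 : ℝ) 1,
          deriv (fun t => g (zp t) k) t₁ = 0 →
            deriv (fun t => g (zp t) k) t₂ = 0 → t₁ = t₂) := by
  intro zp g k
  obtain ⟨hz0, hz1⟩ := hz
  have hq0 : 0 < q := by omega
  have hr1 : (0:ℝ) < ↑(r-1) := by exact_mod_cast (by omega : 0 < r - 1)
  constructor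
  · intro hk
    show AntitoneOn (fun t => GCWP11.FF q r β z t k / GCWP11.SS q r β z t) (Set.Icc 0 1)
    apply antitoneOn_of_deriv_nonpos (convex_Icc 0 1)
    · exact (continuous_iff_continuousAt.mpr
        (fun x => (GCWP11.hasDerivAt_target q r β z hq0 k x).continuousAt)).continuousOn
    · intro x _
      exact (GCWP11.hasDerivAt_target q r β z hq0 k x).differentiableAt.differentiableWithinAt
    · rw [interior_Icc]
      intro x hx
      rw [(GCWP11.hasDerivAt_target q r β z hq0 k x).deriv]
      apply div_nonpos_of_nonpos_of_nonneg _ (sq_nonneg _)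
      have hphi := GCWP11.Phi_nonpos q r β z hq hβ hz0 hz1 k hk (Set.Ioo_subset_Icc_self hx)
      have hF : 0 < GCWP11.FF q r β z x k := Real.exp_pos _
      have hco : (0:ℝ) ≤ β * ↑(r-1) * GCWP11.FF q r β z x k := by positivity
      exact mul_nonpos_of_nonneg_of_nonpos hco hphi
  · intro hk t₁ ht₁ t₂ ht₂ hd₁ hd₂
    have key : ∀ tt : ℝ, deriv (fun t => g (zp t) k) tt = 0 → GCWP11.Phi q r β z k tt = 0 := by
      intro tt h
      have h0 : deriv (fun s => GCWP11.FF q r β z s k / GCWP11.SS q r β z s) tt = 0 := h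
      rw [(GCWP11.hasDerivAt_target q r β z hq0 k tt).deriv] at h0
      have hden : (GCWP11.SS q r β z tt)^2 ≠ 0 :=
        pow_ne_zero _ (ne_of_gt (GCWP11.SS_pos q r β z hq0 tt))
      have hnum : β * ↑(r-1) * GCWP11.FF q r β z tt k * GCWP11.Phi q r β z k tt = 0 :=
        (div_eq_zero_iff.mp h0).resolve_right hden
      have hco : β * ↑(r-1) * GCWP11.FF q r β z tt k ≠ 0 := by
        have : 0 < β * ↑(r-1) * GCWP11.FF q r β z tt k := by
          have := Real.exp_pos (β * (GCWP11.A q z tt k)^(r-1))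
          positivity
        exact ne_of_gt this
      exact (mul_eq_zero.mp hnum).resolve_left hco
    exact unique_zero_of_deriv_neg (f := GCWP11.Phi q r β z k) (f' := GCWP11.Phi' q r β z k)
      (GCWP11.hasDerivAt_Phi q r β z k)
      (fun t ht h0 => GCWP11.Phi'_neg q r β z hq hr hβ hz0 hz1 k hk ht h0)
      ht₁ ht₂ (key t₁ hd₁) (key t₂ hd₂)
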